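/- The minimal degree of a nonzero weak polynomial identity for the pair (A₁, V) is three: there exists a nonzero f ∈ F⟨X⟩ of degree 3 vanishing under all substitutions from V (e.g. St₃), and no nonzero f of degree ≤ 2 does. -/

import Mathlib

/-- The defining relation of the Weyl algebra: `y * x = x * y + 1`. -/
inductive WeylRel (F : Type) [Field F] :
    FreeAlgebra F (Fin 2) → FreeAlgebra F (Fin 2) → Prop
  | rel : WeylRel F (FreeAlgebra.ι F 1 * FreeAlgebra.ι F 0)
      (FreeAlgebra.ι F 0 * FreeAlgebra.ι F 1 + 1)

/-- The Weyl algebra A₁ over `F`. -/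
abbrev Weyl (F : Type) [Field F] := RingQuot (WeylRel F)

/-- The generator `x` of the Weyl algebra. -/
noncomputable def Wx (F : Type) [Field F] : Weyl F :=
  RingQuot.mkAlgHom F (WeylRel F) (FreeAlgebra.ι F 0)

/-- The generator `y` of the Weyl algebra. -/
noncomputable def Wy (F : Type) [Field F] : Weyl F :=
  RingQuot.mkAlgHom F (WeylRel F) (FreeAlgebra.ι F 1)

/-- `V = F`-span of `{x, y}` inside the Weyl algebra. -/
noncomputable def WV (F : Type) [Field F] : Submodule F (Weyl F) :=
  Submodule.span F {Wx F, Wy F}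
section Aux
variable (F : Type) [Field F]

open Polynomial

-- representation
noncomputable def preRho : FreeAlgebra F (Fin 2) →ₐ[F] Module.End F (Polynomial F) :=
  FreeAlgebra.lift F ![LinearMap.mulLeft F Polynomial.X, Polynomial.derivative]

theorem preRho_rel : ∀ ⦃a b⦄, WeylRel F a b → preRho F a = preRho F b := by
  rintro a b ⟨⟩
  simp only [preRho, map_mul, map_add, map_one, FreeAlgebra.lift_ι_apply]
  apply LinearMap.ext
  intro p
  simp only [Module.End.mul_apply, LinearMap.add_apply, LinearMap.mulLeft_apply,
    Module.End.one_apply, Matrix.cons_val_zero, Matrix.cons_val_one, Matrix.head_cons, Polynomial.derivative_mul, Polynomial.derivative_X]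
  ring

noncomputable def rho : Weyl F →ₐ[F] Module.End F (Polynomial F) :=
  RingQuot.liftAlgHom F ⟨preRho F, preRho_rel F⟩

theorem rho_x : rho F (Wx F) = LinearMap.mulLeft F Polynomial.X := by
  simp [rho, Wx, RingQuot.liftAlgHom_mkAlgHom_apply, preRho, FreeAlgebra.lift_ι_apply]

theorem rho_y : rho F (Wy F) = (Polynomial.derivative : Polynomial F →ₗ[F] Polynomial F) := by
  simp [rho, Wy, RingQuot.liftAlgHom_mkAlgHom_apply, preRho, FreeAlgebra.lift_ι_apply]

theorem weyl_rel : Wy F * Wx F = Wx F * Wy F + 1 := by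
  have := RingQuot.mkAlgHom_rel F (WeylRel.rel (F := F))
  simpa [Wx, Wy, map_mul, map_add, map_one] using this


local notation "E" => FreeAlgebra.equivMonoidAlgebraFreeMonoid (R := F) (X := ℕ)

theorem E_iota (i : ℕ) : E (FreeAlgebra.ι F i) = MonoidAlgebra.single (FreeMonoid.of i) 1 := by
  simp [FreeAlgebra.equivMonoidAlgebraFreeMonoid, FreeAlgebra.lift_ι_apply]

theorem E_word (l : List ℕ) :
    E ((l.map (FreeAlgebra.ι F)).prod) = MonoidAlgebra.single (FreeMonoid.ofList l) 1 := by
  induction l with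
  | nil => simp [MonoidAlgebra.one_def]
  | cons a t ih =>
      simp only [List.map_cons, List.prod_cons, map_mul, ih, E_iota]
      rw [MonoidAlgebra.single_mul_single]
      simp

noncomputable def ww (l : List ℕ) : FreeAlgebra F ℕ := (l.map (FreeAlgebra.ι F)).prod

theorem list_ne {l l' : List ℕ} (h : l ≠ l') :
    (FreeMonoid.ofList l : FreeMonoid ℕ) ≠ FreeMonoid.ofList l' := fun hh =>
  absurd (congrArg FreeMonoid.toList hh) (by simpa using h)

theorem part1_ne :
    ww F [0,1,2] - ww F [0,2,1] - ww F [1,2,0] + ww F [2,1,0] ≠ 0 := by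
  intro h
  have h1 := congrArg (fun z => E z) h
  simp only [map_sub, map_add, map_zero, ww, E_word] at h1
  have h1' : (Finsupp.single (FreeMonoid.ofList [0,1,2]) (1:F)
      - Finsupp.single (FreeMonoid.ofList [0,2,1]) 1
      - Finsupp.single (FreeMonoid.ofList [1,2,0]) 1
      + Finsupp.single (FreeMonoid.ofList [2,1,0]) 1) = 0 := congrArg MonoidAlgebra.coeff h1
  have h2 := DFunLike.congr_fun h1' (FreeMonoid.ofList [0,1,2])
  rw [Finsupp.add_apply, Finsupp.sub_apply, Finsupp.sub_apply,
    Finsupp.single_eq_same, Finsupp.single_eq_of_ne (list_ne (by decide)),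
    Finsupp.single_eq_of_ne (list_ne (by decide)),
    Finsupp.single_eq_of_ne (list_ne (by decide))] at h2
  norm_num at h2

theorem comm_central' {a b : Weyl F} (ha : a ∈ WV F) (hb : b ∈ WV F) :
    ∃ c : F, a * b - b * a = c • (1 : Weyl F) := by
  obtain ⟨a1, a2, rfl⟩ := Submodule.mem_span_pair.mp ha
  obtain ⟨b1, b2, rfl⟩ := Submodule.mem_span_pair.mp hb
  refine ⟨a2*b1 - a1*b2, ?_⟩
  have h : Wy F * Wx F = Wx F * Wy F + 1 := weyl_rel F
  simp only [add_mul, mul_add, smul_mul_assoc, mul_smul_comm, smul_smul, h]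
  module

theorem lift_word (u : ℕ → Weyl F) (l : List ℕ) :
    FreeAlgebra.lift F u (ww F l) = (l.map u).prod := by
  induction l with
  | nil => simp [ww]
  | cons a t ih => simp only [ww, List.map_cons, List.prod_cons, map_mul,
      FreeAlgebra.lift_ι_apply] at *; rw [ih]

theorem part1_vanish (u : ℕ → Weyl F) (hu : ∀ i, u i ∈ WV F) :
    FreeAlgebra.lift F u (ww F [0,1,2] - ww F [0,2,1] - ww F [1,2,0] + ww F [2,1,0]) = 0 := by
  obtain ⟨c, hc⟩ := comm_central' F (hu 1) (hu 2)
  simp only [map_sub, map_add, lift_word, List.map_cons, List.map_nil, List.prod_cons,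
    List.prod_nil, mul_one]
  have : u 0 * (u 1 * u 2) - u 0 * (u 2 * u 1) - u 1 * (u 2 * u 0) + u 2 * (u 1 * u 0)
      = u 0 * (u 1 * u 2 - u 2 * u 1) - (u 1 * u 2 - u 2 * u 1) * u 0 := by
    rw [mul_sub, sub_mul, mul_assoc, mul_assoc]; abel
  rw [this, hc, mul_smul_comm, smul_mul_assoc, one_mul, mul_one, sub_self]

theorem freemonoid_eq_iff (m : FreeMonoid ℕ) (l₀ : List ℕ) :
    FreeMonoid.toList m = l₀ ↔ m = FreeMonoid.ofList l₀ := Iff.rfl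

theorem hrep (f : FreeAlgebra F ℕ) :
    f = (E f).coeff.sum fun m c => c • ww F (FreeMonoid.toList m) := by
  apply (FreeAlgebra.equivMonoidAlgebraFreeMonoid (R := F) (X := ℕ)).injective
  rw [map_finsuppSum]
  have : ∀ m : FreeMonoid ℕ, ∀ c : F,
      E (c • ww F (FreeMonoid.toList m)) = MonoidAlgebra.single m c := by
    intro m c
    rw [map_smul]; unfold ww; rw [E_word, FreeMonoid.ofList_toList]
    exact MonoidAlgebra.smul_single' c m 1 |>.trans (by rw [mul_one])
  calc E f = MonoidAlgebra.ofCoeff ((E f).coeff.sum Finsupp.single) := by rw [Finsupp.sum_single]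
    _ = (E f).coeff.sum MonoidAlgebra.single := MonoidAlgebra.ofCoeff_finsuppSum _ _
    _ = _ := by
        rw [Finsupp.sum, Finsupp.sum]
        exact Finset.sum_congr rfl fun m _ => (this m ((E f).coeff m)).symm

theorem heval (f : FreeAlgebra F ℕ) (u : ℕ → Weyl F) :
    FreeAlgebra.lift F u f = (E f).coeff.sum fun m c => c • ((FreeMonoid.toList m).map u).prod := by
  conv_lhs => rw [hrep F f]
  rw [map_finsuppSum]
  rw [Finsupp.sum, Finsupp.sum]
  exact Finset.sum_congr rfl fun m _ => by rw [map_smul, lift_word]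

open Polynomial in
theorem key (f : FreeAlgebra F ℕ)
    (hsupp : ∀ m ∈ (E f).coeff.support, (FreeMonoid.toList m).length ≤ 2)
    (u : ℕ → Weyl F) (hz : FreeAlgebra.lift F u f = 0)
    (n : ℕ) (l₀ : List ℕ) (e : F)
    (hcoeff : ∀ l : List ℕ, l.length ≤ 2 →
      Polynomial.coeff ((rho F ((l.map u).prod)) 1) n
        = (if l = l₀ then 1 else 0) + (if l = [] then e else 0)) :
    (E f).coeff (FreeMonoid.ofList l₀) + e * (E f).coeff (FreeMonoid.ofList []) = 0 := by
  classical
  have h0 : (Polynomial.lcoeff F n) ((LinearMap.applyₗ (1 : F[X]))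
      ((rho F).toLinearMap (FreeAlgebra.lift F u f))) = 0 := by
    rw [hz]; simp
  rw [heval F f u] at h0
  rw [map_finsuppSum, map_finsuppSum, map_finsuppSum] at h0
  rw [Finsupp.sum] at h0
  have h1 : ∀ m ∈ (E f).coeff.support,
      (Polynomial.lcoeff F n) ((LinearMap.applyₗ (1 : F[X]))
        ((rho F).toLinearMap ((E f).coeff m • ((FreeMonoid.toList m).map u).prod)))
      = (E f).coeff m * ((if m = FreeMonoid.ofList l₀ then 1 else 0)
          + (if m = FreeMonoid.ofList [] then e else 0)) := by
    intro m hm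
    rw [map_smul, map_smul, map_smul, smul_eq_mul]
    congr 1
    have := hcoeff (FreeMonoid.toList m) (hsupp m hm)
    simp only [AlgHom.toLinearMap_apply, LinearMap.applyₗ_apply_apply, lcoeff_apply]
    rw [this]
    exact congrArg₂ (· + ·) (if_congr Iff.rfl rfl rfl) (if_congr Iff.rfl rfl rfl)
  rw [Finset.sum_congr rfl h1] at h0
  simp only [mul_add, Finset.sum_add_distrib] at h0
  simp only [mul_ite, mul_one, mul_zero, Finset.sum_ite_eq'] at h0
  simp only [FreeMonoid.ofList_nil] at h0 ⊢
  by_cases hA : FreeMonoid.ofList l₀ ∈ (E f).coeff.support <;>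
    by_cases hB : (1 : FreeMonoid ℕ) ∈ (E f).coeff.support <;>
    simp only [hA, hB, if_true, if_false] at h0
  · linear_combination h0
  · rw [Finsupp.notMem_support_iff.mp hB]; linear_combination h0
  · rw [Finsupp.notMem_support_iff.mp hA]; linear_combination h0
  · rw [Finsupp.notMem_support_iff.mp hA, Finsupp.notMem_support_iff.mp hB]; ring

open Polynomial

theorem rho_x_apply (p : F[X]) : rho F (Wx F) p = X * p := by
  rw [rho_x]; exact LinearMap.mulLeft_apply _ _ _

theorem rho_y_apply (p : F[X]) : rho F (Wy F) p = derivative p := by rw [rho_y]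

theorem coeffZ : ∀ l : List ℕ, l.length ≤ 2 →
    Polynomial.coeff ((rho F ((l.map (fun _ => (0 : Weyl F))).prod)) 1) 0
      = (if l = ([] : List ℕ) then 1 else 0) + (if l = [] then (0:F) else 0) := by
  intro l hl
  match l with
  | [] => simp
  | [k] => simp
  | [k, m] => simp
  | a :: b :: c :: t => simp at hl

theorem sqX : (X : F[X]) * (X * 1) = X ^ 2 := by ring

theorem coeffX (i : ℕ) (n : ℕ) (hn : n = 1 ∨ n = 2) :
    ∀ l : List ℕ, l.length ≤ 2 →
    Polynomial.coeff ((rho F ((l.map (fun k => if k = i then Wx F else 0)).prod)) 1) n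
      = (if l = (if n = 1 then [i] else [i,i]) then 1 else 0) + (if l = [] then (0:F) else 0) := by
  intro l hl
  match l with
  | [] =>
      rcases hn with rfl | rfl <;> simp [coeff_one]
  | [k] =>
      by_cases hk : k = i
      · subst hk
        rcases hn with rfl | rfl <;>
          simp [map_mul, Module.End.mul_apply, rho_x_apply, coeff_X]
      · rcases hn with rfl | rfl <;> simp [hk]
  | [k, m] =>
      by_cases hk : k = i <;> by_cases hm : m = i
      · subst hk; subst hm
        rcases hn with rfl | rfl <;>
          simp [map_mul, Module.End.mul_apply, rho_x_apply, sqX, coeff_X_pow]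
      · subst hk
        rcases hn with rfl | rfl <;> simp [hm, map_mul, Module.End.mul_apply]
      · subst hm
        rcases hn with rfl | rfl <;> simp [hk, map_mul, Module.End.mul_apply, rho_x_apply]
      · rcases hn with rfl | rfl <;> simp [hk, hm, map_mul, Module.End.mul_apply]
  | a :: b :: c :: t => simp at hl

theorem coeffXY (i j : ℕ) (hij : i ≠ j) :
    ∀ l : List ℕ, l.length ≤ 2 →
    Polynomial.coeff
      ((rho F ((l.map (fun k => if k = i then Wx F else if k = j then Wy F else 0)).prod)) 1) 0
      = (if l = [j, i] then 1 else 0) + (if l = [] then (1:F) else 0) := by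
  intro l hl
  have hji : j ≠ i := hij.symm
  match l with
  | [] => simp
  | [k] =>
      by_cases hk : k = i
      · subst hk; simp [hij, rho_x_apply, coeff_X]
      · by_cases hk' : k = j
        · subst hk'; simp [hji, rho_y_apply]
        · simp [hk, hk']
  | [k, m] =>
      have expand : ∀ a b : Weyl F, (rho F (a * (b * 1))) 1 = (rho F a) ((rho F b) 1) := by
        intro a b; rw [mul_one, map_mul, Module.End.mul_apply]
      simp only [List.map_cons, List.map_nil, List.prod_cons, List.prod_nil, expand,
        List.cons.injEq, eq_false (show ¬([k,m] = []) by simp), if_false]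
      split_ifs <;>
        simp_all [rho_x_apply, rho_y_apply, sqX, coeff_X_pow, coeff_X, coeff_one]
  | a :: b :: c :: t => simp at hl

theorem supp_le (f : FreeAlgebra F ℕ) (k : ℕ)
    (hf : f ∈ Submodule.span F {w : FreeAlgebra F ℕ |
      ∃ l : List ℕ, l.length ≤ k ∧ w = (l.map (FreeAlgebra.ι F)).prod}) :
    ∀ m ∈ (E f).coeff.support, (FreeMonoid.toList m).length ≤ k := by
  have hle : Submodule.span F {w : FreeAlgebra F ℕ |
      ∃ l : List ℕ, l.length ≤ k ∧ w = (l.map (FreeAlgebra.ι F)).prod} ≤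
      Submodule.comap ((MonoidAlgebra.coeffLinearEquiv F).toLinearMap ∘ₗ
        (FreeAlgebra.equivMonoidAlgebraFreeMonoid (R := F) (X := ℕ)).toLinearMap)
        (Finsupp.supported F F {m : FreeMonoid ℕ | (FreeMonoid.toList m).length ≤ k}) := by
    apply Submodule.span_le.mpr
    rintro w ⟨l, hl, rfl⟩
    have : (E ((l.map (FreeAlgebra.ι F)).prod)).coeff ∈
        Finsupp.supported F F {m : FreeMonoid ℕ | (FreeMonoid.toList m).length ≤ k} := by
      show (E ((l.map (FreeAlgebra.ι F)).prod)).coeff ∈ _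
      rw [E_word, MonoidAlgebra.coeff_single]
      exact Finsupp.single_mem_supported F 1 (by simpa using hl)
    exact this
  have := hle hf
  simp only [Submodule.mem_comap] at this
  intro m hm
  exact Finsupp.mem_supported F (E f).coeff |>.mp this hm

theorem Wx_mem : Wx F ∈ WV F := Submodule.subset_span (by simp)
theorem Wy_mem : Wy F ∈ WV F := Submodule.subset_span (by simp)

end Aux

/-- The minimal degree of a nonzero weak polynomial identity for (A₁, V) is three:
there is a nonzero identity of degree ≤ 3 (lying in the span of words of length ≤ 3),
and every identity of degree ≤ 2 is zero. -/
theorem weyl_minimal_weak_identity_degree_three (F : Type) [Field F] [Infinite F] :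
    (∃ f : FreeAlgebra F ℕ,
      f ∈ Submodule.span F {w : FreeAlgebra F ℕ |
        ∃ l : List ℕ, l.length ≤ 3 ∧ w = (l.map (FreeAlgebra.ι F)).prod} ∧
      f ≠ 0 ∧
      ∀ u : ℕ → Weyl F, (∀ i, u i ∈ WV F) → FreeAlgebra.lift F u f = 0) ∧
    (∀ f : FreeAlgebra F ℕ,
      f ∈ Submodule.span F {w : FreeAlgebra F ℕ |
        ∃ l : List ℕ, l.length ≤ 2 ∧ w = (l.map (FreeAlgebra.ι F)).prod} →
      (∀ u : ℕ → Weyl F, (∀ i, u i ∈ WV F) → FreeAlgebra.lift F u f = 0) →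
      f = 0) := by
  constructor
  · refine ⟨ww F [0,1,2] - ww F [0,2,1] - ww F [1,2,0] + ww F [2,1,0], ?_, part1_ne F,
      part1_vanish F⟩
    have hmem : ∀ l : List ℕ, l.length ≤ 3 → ww F l ∈ Submodule.span F
        {w : FreeAlgebra F ℕ | ∃ l : List ℕ, l.length ≤ 3 ∧ w = (l.map (FreeAlgebra.ι F)).prod} :=
      fun l hl => Submodule.subset_span ⟨l, hl, rfl⟩
    exact Submodule.add_mem _ (Submodule.sub_mem _ (Submodule.sub_mem _
      (hmem _ (by norm_num)) (hmem _ (by norm_num))) (hmem _ (by norm_num)))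
      (hmem _ (by norm_num))
  · intro f hf hid
    have hsupp := supp_le F f 2 hf
    -- empty word
    have h0 : (FreeAlgebra.equivMonoidAlgebraFreeMonoid f).coeff (FreeMonoid.ofList []) = 0 := by
      have := key F f hsupp (fun _ => 0) (hid _ (fun _ => (WV F).zero_mem)) 0 [] 0 (coeffZ F)
      simpa using this
    -- single letters and squares
    have hx : ∀ i : ℕ, (FreeAlgebra.equivMonoidAlgebraFreeMonoid f).coeff (FreeMonoid.ofList [i]) = 0 := by
      intro i
      have hu : ∀ k : ℕ, (if k = i then Wx F else 0) ∈ WV F := by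
        intro k; split_ifs; exacts [Wx_mem F, (WV F).zero_mem]
      have hc := coeffX F i 1 (Or.inl rfl)
      simp only [if_pos rfl] at hc
      have := key F f hsupp _ (hid _ hu) 1 [i] 0 (by simpa using hc)
      simpa using this
    have hxx : ∀ i : ℕ, (FreeAlgebra.equivMonoidAlgebraFreeMonoid f).coeff (FreeMonoid.ofList [i, i]) = 0 := by
      intro i
      have hu : ∀ k : ℕ, (if k = i then Wx F else 0) ∈ WV F := by
        intro k; split_ifs; exacts [Wx_mem F, (WV F).zero_mem]
      have hc := coeffX F i 2 (Or.inr rfl)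
      norm_num at hc
      have := key F f hsupp _ (hid _ hu) 2 [i, i] 0 (by simpa using hc)
      simpa using this
    have hxy : ∀ i j : ℕ, i ≠ j → (FreeAlgebra.equivMonoidAlgebraFreeMonoid f).coeff (FreeMonoid.ofList [j, i]) = 0 := by
      intro i j hij
      have hu : ∀ k : ℕ, (if k = i then Wx F else if k = j then Wy F else 0) ∈ WV F := by
        intro k; split_ifs; exacts [Wx_mem F, Wy_mem F, (WV F).zero_mem]
      have := key F f hsupp _ (hid _ hu) 0 [j, i] 1 (coeffXY F i j hij)
      rw [h0] at this
      simpa using this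
    have hE : FreeAlgebra.equivMonoidAlgebraFreeMonoid f = 0 := by
      ext m
      by_cases hm : m ∈ (FreeAlgebra.equivMonoidAlgebraFreeMonoid f).coeff.support
      · have hlen := hsupp m hm
        have hm' : m = FreeMonoid.ofList (FreeMonoid.toList m) := rfl
        rw [MonoidAlgebra.coeff_zero, Finsupp.coe_zero, Pi.zero_apply, hm']
        match hl : FreeMonoid.toList m with
        | [] => exact h0
        | [a] => exact hx a
        | [a, b] =>
            by_cases hab : a = b
            · subst hab; exact hxx a
            · exact hxy b a (Ne.symm hab)
        | a :: b :: c :: t => rw [hl] at hlen; simp at hlen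
      · simpa using Finsupp.notMem_support_iff.mp hm
    have := congrArg (FreeAlgebra.equivMonoidAlgebraFreeMonoid (R := F) (X := ℕ)).symm hE
    simpa using this
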